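/- Let a > 0, b > 0, ε > 0 with a + ε < b. There exists δ_0 > 0 (depending only on a, b, ε) such that for every δ with 0 < δ ≤ δ_0 and every w ≥ 0, 2b ∫_{(b/(b-a-ε)) w + δ^{-1}}^{∞} v · e^{ε v^2} e^{a v^2} e^{-b v^2} e^{-b w^2} I_0(2 b v w) dv ≤ δ · ( b/(b-a-ε) ) · exp( ((a+ε)b/(b-a-ε)) w^2 ). -/

import Mathlib

set_option maxHeartbeats 4000000


open MeasureTheory Real

/-- Modified Bessel function of the first kind of order zero,
`I₀(y) = (1/π) ∫_0^π e^{y cos φ} dφ`. -/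
noncomputable def besselI0 (y : ℝ) : ℝ :=
  (1 / Real.pi) * ∫ φ in (0:ℝ)..Real.pi, Real.exp (y * Real.cos φ)

lemma besselI0_nonneg (y : ℝ) : 0 ≤ besselI0 y := by
  unfold besselI0
  apply mul_nonneg (by positivity)
  apply intervalIntegral.integral_nonneg Real.pi_pos.le
  intro x _; positivity

lemma besselI0_le_exp {y : ℝ} (hy : 0 ≤ y) : besselI0 y ≤ Real.exp y := by
  unfold besselI0
  have h1 : ∫ φ in (0:ℝ)..Real.pi, Real.exp (y * Real.cos φ)
      ≤ ∫ _φ in (0:ℝ)..Real.pi, Real.exp y := by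
    apply intervalIntegral.integral_mono_on Real.pi_pos.le
    · exact (Continuous.intervalIntegrable (by continuity) _ _)
    · exact intervalIntegrable_const
    · intro x _
      exact Real.exp_le_exp.2 (by nlinarith [Real.cos_le_one x])
  have h2 : ∫ _φ in (0:ℝ)..Real.pi, Real.exp y = Real.pi * Real.exp y := by
    rw [intervalIntegral.integral_const]; simp [smul_eq_mul]
  calc (1 / Real.pi) * ∫ φ in (0:ℝ)..Real.pi, Real.exp (y * Real.cos φ)
      ≤ (1 / Real.pi) * (Real.pi * Real.exp y) := by
        rw [← h2]; exact mul_le_mul_of_nonneg_left h1 (by positivity)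
    _ = Real.exp y := by field_simp

lemma cos_le_quadratic {φ : ℝ} (h0 : 0 ≤ φ) (hπ : φ ≤ Real.pi) :
    Real.cos φ ≤ 1 - 2 * φ ^ 2 / Real.pi ^ 2 := by
  have hπ0 := Real.pi_pos
  have hs : φ / Real.pi ≤ Real.sin (φ / 2) := by
    have h := Real.mul_le_sin (x := φ / 2) (by linarith) (by linarith)
    calc φ / Real.pi = 2 / Real.pi * (φ / 2) := by ring
      _ ≤ Real.sin (φ / 2) := h
  have hcos : Real.cos (φ / 2) ^ 2 = 1 / 2 + Real.cos φ / 2 := by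
    have := Real.cos_sq (φ / 2)
    rw [show 2 * (φ / 2) = φ by ring] at this
    exact this
  have hpyth := Real.sin_sq_add_cos_sq (φ / 2)
  have hφπ : 0 ≤ φ / Real.pi := by positivity
  have h2 : (φ / Real.pi) ^ 2 ≤ Real.sin (φ / 2) ^ 2 := by
    apply pow_le_pow_left₀ hφπ hs
  have h3 : (φ / Real.pi) ^ 2 = φ ^ 2 / Real.pi ^ 2 := by rw [div_pow]
  have h4 : Real.sin (φ / 2) ^ 2 = (1 - Real.cos φ) / 2 := by linarith
  rw [h3, h4] at h2
  have := mul_le_mul_of_nonneg_left h2 (le_of_lt (by positivity : (0:ℝ) < 2))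
  have heq : 2 * φ ^ 2 / Real.pi ^ 2 = 2 * (φ ^ 2 / Real.pi ^ 2) := by ring
  linarith

lemma besselI0_le_exp_div_sqrt {y : ℝ} (hy : 0 < y) :
    besselI0 y ≤ Real.exp y / Real.sqrt y := by
  have hπ := Real.pi_pos
  set s : ℝ := 2 * y / Real.pi ^ 2 with hs
  have hs0 : 0 < s := by positivity
  have h1 : ∫ φ in (0:ℝ)..Real.pi, Real.exp (y * Real.cos φ)
      ≤ ∫ φ in (0:ℝ)..Real.pi, Real.exp y * Real.exp (-s * φ ^ 2) := by
    apply intervalIntegral.integral_mono_on Real.pi_pos.le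
    · exact (Continuous.intervalIntegrable (by continuity) _ _)
    · exact (Continuous.intervalIntegrable (by continuity) _ _)
    · intro x hx
      rw [← Real.exp_add]
      apply Real.exp_le_exp.2
      have hc := cos_le_quadratic hx.1 hx.2
      have : y * Real.cos x ≤ y * (1 - 2 * x ^ 2 / Real.pi ^ 2) :=
        mul_le_mul_of_nonneg_left hc hy.le
      have heq : y * (1 - 2 * x ^ 2 / Real.pi ^ 2) = y + -s * x ^ 2 := by
        rw [hs]; ring
      linarith
  have h2 : ∫ φ in (0:ℝ)..Real.pi, Real.exp y * Real.exp (-s * φ ^ 2)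
      ≤ Real.exp y * (Real.sqrt (Real.pi / s) / 2) := by
    rw [intervalIntegral.integral_const_mul]
    apply mul_le_mul_of_nonneg_left _ (Real.exp_pos y).le
    rw [← integral_gaussian_Ioi s]
    rw [intervalIntegral.integral_of_le Real.pi_pos.le]
    apply setIntegral_mono_set ((integrable_exp_neg_mul_sq hs0).integrableOn)
    · filter_upwards with x using (Real.exp_pos _).le
    · exact (Set.Ioc_subset_Ioi_self).eventuallyLE
  have hfinal : (1 / Real.pi) * (Real.exp y * (Real.sqrt (Real.pi / s) / 2))
      ≤ Real.exp y / Real.sqrt y := by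
    rw [div_eq_mul_inv (Real.exp y)]
    have hkey : (1 / Real.pi) * (Real.sqrt (Real.pi / s) / 2) ≤ (Real.sqrt y)⁻¹ := by
      have hsy : Real.pi / s = Real.pi ^ 3 / (2 * y) := by
        rw [hs]; field_simp
      rw [hsy]
      have hsq : (0:ℝ) < Real.sqrt y := Real.sqrt_pos.2 hy
      have hbd : Real.sqrt (Real.pi ^ 3 / (2 * y)) ≤ 2 * Real.pi / Real.sqrt y := by
        rw [Real.sqrt_le_left (by positivity)]
        rw [div_pow, Real.sq_sqrt hy.le]
        rw [div_le_div_iff₀ (by positivity) hy]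
        nlinarith [mul_le_mul_of_nonneg_right Real.pi_le_four
          (le_of_lt (mul_pos (pow_pos Real.pi_pos 2) hy)), mul_pos (pow_pos Real.pi_pos 2) hy]
      calc 1 / Real.pi * (Real.sqrt (Real.pi ^ 3 / (2 * y)) / 2)
          ≤ 1 / Real.pi * ((2 * Real.pi / Real.sqrt y) / 2) := by
            apply mul_le_mul_of_nonneg_left _ (by positivity)
            linarith
        _ = (Real.sqrt y)⁻¹ := by field_simp
    calc (1 / Real.pi) * (Real.exp y * (Real.sqrt (Real.pi / s) / 2))
        = Real.exp y * ((1 / Real.pi) * (Real.sqrt (Real.pi / s) / 2)) := by ring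
      _ ≤ Real.exp y * (Real.sqrt y)⁻¹ :=
          mul_le_mul_of_nonneg_left hkey (Real.exp_pos y).le
  unfold besselI0
  calc (1 / Real.pi) * ∫ φ in (0:ℝ)..Real.pi, Real.exp (y * Real.cos φ)
      ≤ (1 / Real.pi) * (Real.exp y * (Real.sqrt (Real.pi / s) / 2)) := by
        apply mul_le_mul_of_nonneg_left (h1.trans h2) (by positivity)
    _ ≤ Real.exp y / Real.sqrt y := hfinal

open MeasureTheory Real

lemma tail_deriv (c m : ℝ) (hc : 0 < c) (v : ℝ) :
    HasDerivAt (fun v : ℝ => -Real.exp (-c * (v - m) ^ 2) / (2 * c))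
      ((v - m) * Real.exp (-c * (v - m) ^ 2)) v := by
  have h1 : HasDerivAt (fun v : ℝ => -c * (v - m) ^ 2) (-c * (2 * (v - m))) v := by
    have h := (((hasDerivAt_id v).sub_const m).pow 2).const_mul (-c)
    simpa using h
  have h2 := h1.exp
  have h3 := (h2.neg).div_const (2 * c)
  refine h3.congr_deriv ?_
  rw [div_eq_iff (by positivity)]
  ring

lemma tail_tendsto (c m : ℝ) (hc : 0 < c) :
    Filter.Tendsto (fun v : ℝ => -Real.exp (-c * (v - m) ^ 2) / (2 * c))
      Filter.atTop (nhds 0) := by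
  have h1 : Filter.Tendsto (fun v : ℝ => (v - m) ^ 2) Filter.atTop Filter.atTop := by
    apply Filter.Tendsto.comp (Filter.tendsto_pow_atTop (two_ne_zero))
    exact Filter.tendsto_atTop_add_const_right _ (-m) Filter.tendsto_id
  have h2 : Filter.Tendsto (fun v : ℝ => -c * (v - m) ^ 2) Filter.atTop Filter.atBot :=
    h1.const_mul_atTop_of_neg (by linarith)
  have h3 : Filter.Tendsto (fun v : ℝ => Real.exp (-c * (v - m) ^ 2))
      Filter.atTop (nhds 0) := Real.tendsto_exp_atBot.comp h2
  have h4 := (h3.neg).div_const (2 * c)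
  simpa using h4

lemma tail_integrable {c m T : ℝ} (hc : 0 < c) (hm : m ≤ T) :
    IntegrableOn (fun v : ℝ => (v - m) * Real.exp (-c * (v - m) ^ 2)) (Set.Ioi T) :=
  integrableOn_Ioi_deriv_of_nonneg' (fun x _ => tail_deriv c m hc x)
    (fun x hx => mul_nonneg (by simp only [Set.mem_Ioi] at hx; linarith) (Real.exp_pos _).le)
    (tail_tendsto c m hc)

lemma tail_int_eq {c m T : ℝ} (hc : 0 < c) (hm : m ≤ T) :
    ∫ v in Set.Ioi T, (v - m) * Real.exp (-c * (v - m) ^ 2)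
      = Real.exp (-c * (T - m) ^ 2) / (2 * c) := by
  have h := integral_Ioi_of_hasDerivAt_of_nonneg' (fun x _ => tail_deriv c m hc x)
    (fun x hx => mul_nonneg (by simp only [Set.mem_Ioi] at hx; linarith) (Real.exp_pos _).le)
    (tail_tendsto c m hc)
  rw [h]; ring

lemma exp_tail_integrable {c m T : ℝ} (hc : 0 < c) :
    IntegrableOn (fun v : ℝ => Real.exp (-c * (v - m) ^ 2)) (Set.Ioi T) :=
  ((integrable_exp_neg_mul_sq hc).comp_sub_right m).integrableOn

lemma exp_tail_le {c m T : ℝ} (hc : 0 < c) (hm : m < T) :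
    ∫ v in Set.Ioi T, Real.exp (-c * (v - m) ^ 2)
      ≤ (1 / (T - m)) * (Real.exp (-c * (T - m) ^ 2) / (2 * c)) := by
  have hTm : 0 < T - m := by linarith
  have hle : ∫ v in Set.Ioi T, Real.exp (-c * (v - m) ^ 2)
      ≤ ∫ v in Set.Ioi T, (1 / (T - m)) * ((v - m) * Real.exp (-c * (v - m) ^ 2)) := by
    apply integral_mono_of_nonneg
    · filter_upwards with x using (Real.exp_pos _).le
    · exact (tail_integrable hc hm.le).const_mul _
    · filter_upwards [ae_restrict_mem measurableSet_Ioi] with x hx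
      simp only [Set.mem_Ioi] at hx
      rw [one_div, inv_mul_eq_div, le_div_iff₀ hTm]
      have hxm : T - m ≤ x - m := by linarith
      have := mul_le_mul_of_nonneg_left hxm (Real.exp_pos (-c * (x - m) ^ 2)).le
      nlinarith [Real.exp_pos (-c * (x - m) ^ 2)]
  rw [integral_const_mul, tail_int_eq hc hm.le] at hle
  exact hle

lemma main_tail_bound {c m T A B : ℝ} (hc : 0 < c) (hm : m < T) (hA : 0 ≤ A) (hB : 0 ≤ B)
    {f : ℝ → ℝ} (hf0 : ∀ v ∈ Set.Ioi T, 0 ≤ f v)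
    (hfle : ∀ v ∈ Set.Ioi T, f v ≤ (B * (v - m) + A) * Real.exp (-c * (v - m) ^ 2)) :
    ∫ v in Set.Ioi T, f v
      ≤ (B + A * (1 / (T - m))) * (Real.exp (-c * (T - m) ^ 2) / (2 * c)) := by
  have hTm : 0 < T - m := by linarith
  have hint1 : IntegrableOn
      (fun v : ℝ => B * ((v - m) * Real.exp (-c * (v - m) ^ 2))) (Set.Ioi T) :=
    (tail_integrable hc hm.le).const_mul _
  have hint2 : IntegrableOn
      (fun v : ℝ => A * Real.exp (-c * (v - m) ^ 2)) (Set.Ioi T) :=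
    (exp_tail_integrable hc).const_mul _
  have hle : ∫ v in Set.Ioi T, f v
      ≤ ∫ v in Set.Ioi T, (B * ((v - m) * Real.exp (-c * (v - m) ^ 2))
          + A * Real.exp (-c * (v - m) ^ 2)) := by
    apply integral_mono_of_nonneg
    · filter_upwards [ae_restrict_mem measurableSet_Ioi] with x hx using hf0 x hx
    · exact hint1.add hint2
    · filter_upwards [ae_restrict_mem measurableSet_Ioi] with x hx
      calc f x ≤ (B * (x - m) + A) * Real.exp (-c * (x - m) ^ 2) := hfle x hx
        _ = B * ((x - m) * Real.exp (-c * (x - m) ^ 2))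
            + A * Real.exp (-c * (x - m) ^ 2) := by ring
  rw [integral_add hint1 hint2, integral_const_mul, integral_const_mul,
    tail_int_eq hc hm.le] at hle
  have h2 := mul_le_mul_of_nonneg_left (exp_tail_le hc hm) hA
  calc ∫ v in Set.Ioi T, f v
      ≤ B * (Real.exp (-c * (T - m) ^ 2) / (2 * c))
        + A * ∫ v in Set.Ioi T, Real.exp (-c * (v - m) ^ 2) := hle
    _ ≤ B * (Real.exp (-c * (T - m) ^ 2) / (2 * c))
        + A * ((1 / (T - m)) * (Real.exp (-c * (T - m) ^ 2) / (2 * c))) := by linarith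
    _ = (B + A * (1 / (T - m))) * (Real.exp (-c * (T - m) ^ 2) / (2 * c)) := by ring



/-- For `a, b, ε > 0` with `a + ε < b` there exists `δ₀ > 0` such that
for all `0 < δ ≤ δ₀` and all `w ≥ 0`,
`2b ∫_{(b/(b-a-ε))w + δ⁻¹}^∞ v e^{εv²} e^{av²} e^{-bv²} e^{-bw²} I₀(2bvw) dv
  ≤ δ (b/(b-a-ε)) exp(((a+ε)b/(b-a-ε)) w²)`. -/
theorem bessel_gaussian_tail_bound_small (a b ε : ℝ) (ha : 0 < a) (hb : 0 < b)
    (hε : 0 < ε) (hab : a + ε < b) :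
    ∃ δ₀ > (0:ℝ), ∀ δ : ℝ, 0 < δ → δ ≤ δ₀ → ∀ w : ℝ, 0 ≤ w →
      2 * b * ∫ v in Set.Ioi ((b / (b - a - ε)) * w + δ⁻¹),
          v * Real.exp (ε * v ^ 2) * Real.exp (a * v ^ 2) * Real.exp (-b * v ^ 2)
            * Real.exp (-b * w ^ 2) * besselI0 (2 * b * v * w)
        ≤ δ * (b / (b - a - ε)) * Real.exp ((a + ε) * b / (b - a - ε) * w ^ 2) := by
  set c := b - a - ε with hc_def
  clear_value c
  have hc : 0 < c := by rw [hc_def]; linarith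
  have hs3 : 0 < Real.sqrt (c ^ 3) := Real.sqrt_pos.2 (by positivity)
  have hs2c : 0 < Real.sqrt (2 * c) := Real.sqrt_pos.2 (by positivity)
  set K : ℝ := 2 / (c * Real.sqrt (c ^ 3)) + 1 / (c * Real.sqrt (2 * c)) with hK_def
  clear_value K
  have hK : 0 < K := by rw [hK_def]; positivity
  refine ⟨min 1 (min (c ^ 2 / 8) (1 / K)), by positivity, ?_⟩
  intro δ hδ hδ0 w hw
  have hδ1 : δ ≤ 1 := le_trans hδ0 (min_le_left _ _)
  have hδc : δ ≤ c ^ 2 / 8 := le_trans hδ0 ((min_le_right _ _).trans (min_le_left _ _))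
  have hδK : δ ≤ 1 / K := le_trans hδ0 ((min_le_right _ _).trans (min_le_right _ _))
  have hδKmul : δ * K ≤ 1 := by
    rw [le_div_iff₀ hK] at hδK; exact hδK
  set m : ℝ := b / c * w with hm_def
  clear_value m
  have hm0 : 0 ≤ m := by rw [hm_def]; positivity
  set T : ℝ := m + δ⁻¹ with hT_def
  clear_value T
  have hmT : m < T := by rw [hT_def]; exact lt_add_of_pos_right _ (inv_pos.2 hδ)
  have hT0 : 0 < T := lt_of_le_of_lt hm0 hmT
  have hTm : T - m = δ⁻¹ := by rw [hT_def]; ring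
  set E : ℝ := Real.exp ((a + ε) * b / c * w ^ 2) with hE_def
  clear_value E
  have hE : 0 < E := by rw [hE_def]; exact Real.exp_pos _
  set X : ℝ := Real.exp (-c * (T - m) ^ 2) with hX_def
  clear_value X
  have hX0 : 0 < X := by rw [hX_def]; exact Real.exp_pos _
  have hXval : X = Real.exp (-(c / δ ^ 2)) := by
    rw [hX_def, hTm]
    congr 1
    field_simp
  have hX1 : X ≤ δ ^ 2 / c := by
    rw [hXval, Real.exp_neg, inv_le_comm₀ (Real.exp_pos _) (by positivity)]
    calc (δ ^ 2 / c)⁻¹ = c / δ ^ 2 := by field_simp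
      _ ≤ Real.exp (c / δ ^ 2) := by
          have := Real.add_one_le_exp (c / δ ^ 2); linarith
  have hX2 : X ≤ 4 * δ ^ 4 / c ^ 2 := by
    rw [hXval, Real.exp_neg, inv_le_comm₀ (Real.exp_pos _) (by positivity)]
    have h2 : Real.exp (c / δ ^ 2) = Real.exp (c / (2 * δ ^ 2)) ^ 2 := by
      rw [← Real.exp_nat_mul]
      congr 1
      push_cast
      field_simp
    have h3 : c / (2 * δ ^ 2) ≤ Real.exp (c / (2 * δ ^ 2)) := by
      have := Real.add_one_le_exp (c / (2 * δ ^ 2)); linarith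
    calc (4 * δ ^ 4 / c ^ 2)⁻¹ = (c / (2 * δ ^ 2)) ^ 2 := by
          field_simp; ring
      _ ≤ Real.exp (c / (2 * δ ^ 2)) ^ 2 := by
          apply pow_le_pow_left₀ (by positivity) h3
      _ = Real.exp (c / δ ^ 2) := h2.symm
  have hcne : c ≠ 0 := ne_of_gt hc
  have hexp : ∀ v : ℝ, ε * v ^ 2 + a * v ^ 2 + -b * v ^ 2 + -b * w ^ 2 + 2 * b * v * w
      = -c * (v - m) ^ 2 + (a + ε) * b / c * w ^ 2 := by
    intro v
    rw [hm_def]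
    field_simp
    rw [hc_def]
    ring
  have hcomb : ∀ v : ℝ, Real.exp (ε * v ^ 2) * Real.exp (a * v ^ 2) * Real.exp (-b * v ^ 2)
      * Real.exp (-b * w ^ 2) * Real.exp (2 * b * v * w)
      = Real.exp (-c * (v - m) ^ 2) * E := by
    intro v
    rw [hE_def, ← Real.exp_add, ← Real.exp_add, ← Real.exp_add, ← Real.exp_add, ← Real.exp_add]
    congr 1
    exact hexp v
  have hf0 : ∀ v ∈ Set.Ioi T, 0 ≤ v * Real.exp (ε * v ^ 2) * Real.exp (a * v ^ 2)
      * Real.exp (-b * v ^ 2) * Real.exp (-b * w ^ 2) * besselI0 (2 * b * v * w) := by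
    intro v hv
    simp only [Set.mem_Ioi] at hv
    have hv0 : 0 < v := lt_trans hT0 hv
    have hbes := besselI0_nonneg (2 * b * v * w)
    positivity
  by_cases hcase : w ≤ c ^ 3 / (8 * b * δ ^ 4)
  · -- small w : use besselI0 ≤ exp
    have hfle : ∀ v ∈ Set.Ioi T,
        v * Real.exp (ε * v ^ 2) * Real.exp (a * v ^ 2) * Real.exp (-b * v ^ 2)
          * Real.exp (-b * w ^ 2) * besselI0 (2 * b * v * w)
        ≤ (E * (v - m) + m * E) * Real.exp (-c * (v - m) ^ 2) := by
      intro v hv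
      simp only [Set.mem_Ioi] at hv
      have hv0 : 0 < v := lt_trans hT0 hv
      have hI : besselI0 (2 * b * v * w) ≤ Real.exp (2 * b * v * w) :=
        besselI0_le_exp (by positivity)
      calc v * Real.exp (ε * v ^ 2) * Real.exp (a * v ^ 2) * Real.exp (-b * v ^ 2)
            * Real.exp (-b * w ^ 2) * besselI0 (2 * b * v * w)
          ≤ v * Real.exp (ε * v ^ 2) * Real.exp (a * v ^ 2) * Real.exp (-b * v ^ 2)
            * Real.exp (-b * w ^ 2) * Real.exp (2 * b * v * w) := by
            apply mul_le_mul_of_nonneg_left hI (by positivity)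
        _ = v * (Real.exp (ε * v ^ 2) * Real.exp (a * v ^ 2) * Real.exp (-b * v ^ 2)
            * Real.exp (-b * w ^ 2) * Real.exp (2 * b * v * w)) := by ring
        _ = v * (Real.exp (-c * (v - m) ^ 2) * E) := by rw [hcomb v]
        _ = (E * (v - m) + m * E) * Real.exp (-c * (v - m) ^ 2) := by ring
    have hmain := main_tail_bound hc hmT (by positivity : (0:ℝ) ≤ m * E) hE.le hf0 hfle
    rw [← hX_def, hTm, one_div, inv_inv] at hmain
    have hkey : (1 + m * δ) * X ≤ δ := by
      have hmW : m ≤ c ^ 2 / (8 * δ ^ 4) := by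
        rw [hm_def]
        calc b / c * w ≤ b / c * (c ^ 3 / (8 * b * δ ^ 4)) := by
              apply mul_le_mul_of_nonneg_left hcase (by positivity)
          _ = c ^ 2 / (8 * δ ^ 4) := by field_simp
      have h1 : m * δ * X ≤ (c ^ 2 / (8 * δ ^ 4)) * δ * (4 * δ ^ 4 / c ^ 2) := by
        apply mul_le_mul (mul_le_mul_of_nonneg_right hmW hδ.le) hX2 hX0.le (by positivity)
      have h2 : (c ^ 2 / (8 * δ ^ 4)) * δ * (4 * δ ^ 4 / c ^ 2) = δ / 2 := by
        field_simp; ring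
      have h3 : X ≤ δ / 2 := by
        calc X ≤ 4 * δ ^ 4 / c ^ 2 := hX2
          _ ≤ δ / 2 := by
            rw [div_le_div_iff₀ (by positivity) (by norm_num)]
            have hδ2 : δ ^ 2 ≤ 1 := by nlinarith
            have hδ4 : δ ^ 4 ≤ δ ^ 2 := by nlinarith
            have h8 : 8 * δ ≤ c ^ 2 := by linarith
            nlinarith [mul_le_mul_of_nonneg_right h8 hδ.le]
      nlinarith
    calc 2 * b * ∫ v in Set.Ioi T,
          v * Real.exp (ε * v ^ 2) * Real.exp (a * v ^ 2) * Real.exp (-b * v ^ 2)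
            * Real.exp (-b * w ^ 2) * besselI0 (2 * b * v * w)
        ≤ 2 * b * ((E + m * E * δ) * (X / (2 * c))) := by
          apply mul_le_mul_of_nonneg_left hmain (by positivity)
      _ = b / c * E * ((1 + m * δ) * X) := by field_simp [hcne]
      _ ≤ b / c * E * δ := by
          apply mul_le_mul_of_nonneg_left hkey (by positivity)
      _ = δ * (b / c) * E := by ring
  · -- large w : use besselI0 ≤ exp / sqrt
    push_neg at hcase
    have hw0 : 0 < w := lt_trans (by positivity) hcase
    have hsbw : 0 < Real.sqrt (2 * b * w) := Real.sqrt_pos.2 (by positivity)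
    have hmdiv : m / (2 * b * w) = 1 / (2 * c) := by
      rw [hm_def]; field_simp
    have hfle : ∀ v ∈ Set.Ioi T,
        v * Real.exp (ε * v ^ 2) * Real.exp (a * v ^ 2) * Real.exp (-b * v ^ 2)
          * Real.exp (-b * w ^ 2) * besselI0 (2 * b * v * w)
        ≤ ((E / Real.sqrt (2 * b * w)) * (v - m) + E / Real.sqrt (2 * c))
            * Real.exp (-c * (v - m) ^ 2) := by
      intro v hv
      simp only [Set.mem_Ioi] at hv
      have hv0 : 0 < v := lt_trans hT0 hv
      have hvm1 : 1 ≤ v - m := by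
        have h1 : (1:ℝ) ≤ δ⁻¹ := one_le_inv_iff₀.2 ⟨hδ, hδ1⟩
        have h2 : m + δ⁻¹ < v := by rw [← hT_def]; exact hv
        linarith
      have hI : besselI0 (2 * b * v * w)
          ≤ Real.exp (2 * b * v * w) / Real.sqrt (2 * b * v * w) :=
        besselI0_le_exp_div_sqrt (by positivity)
      have hsv : Real.sqrt (2 * b * v * w) = Real.sqrt v * Real.sqrt (2 * b * w) := by
        rw [show 2 * b * v * w = v * (2 * b * w) by ring, Real.sqrt_mul hv0.le]
      have hsqv : Real.sqrt v ≤ (v - m) + Real.sqrt m := by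
        have h1 : Real.sqrt v ≤ Real.sqrt (v - m) + Real.sqrt m := by
          apply (Real.sqrt_le_left (by positivity)).2
          have h2 := Real.sq_sqrt (show (0:ℝ) ≤ v - m by linarith)
          have h3 := Real.sq_sqrt hm0
          nlinarith [mul_nonneg (Real.sqrt_nonneg (v - m)) (Real.sqrt_nonneg m)]
        have h4 : Real.sqrt (v - m) ≤ v - m := by
          apply (Real.sqrt_le_left (by linarith)).2
          nlinarith
        linarith
      have hdivm : Real.sqrt m / Real.sqrt (2 * b * w) = 1 / Real.sqrt (2 * c) := by
        rw [← Real.sqrt_div hm0, hmdiv, Real.sqrt_div (by norm_num : (0:ℝ) ≤ 1), Real.sqrt_one]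
      have hratio : v / Real.sqrt (2 * b * v * w)
          ≤ (v - m) / Real.sqrt (2 * b * w) + 1 / Real.sqrt (2 * c) := by
        have e1 : v / Real.sqrt (2 * b * v * w) = Real.sqrt v / Real.sqrt (2 * b * w) := by
          rw [hsv, ← div_div, Real.div_sqrt]
        rw [e1, ← hdivm]
        calc Real.sqrt v / Real.sqrt (2 * b * w)
            ≤ ((v - m) + Real.sqrt m) / Real.sqrt (2 * b * w) := by
              gcongr
          _ = (v - m) / Real.sqrt (2 * b * w) + Real.sqrt m / Real.sqrt (2 * b * w) := by
              rw [add_div]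
      calc v * Real.exp (ε * v ^ 2) * Real.exp (a * v ^ 2) * Real.exp (-b * v ^ 2)
            * Real.exp (-b * w ^ 2) * besselI0 (2 * b * v * w)
          ≤ v * Real.exp (ε * v ^ 2) * Real.exp (a * v ^ 2) * Real.exp (-b * v ^ 2)
            * Real.exp (-b * w ^ 2)
            * (Real.exp (2 * b * v * w) / Real.sqrt (2 * b * v * w)) := by
            apply mul_le_mul_of_nonneg_left hI (by positivity)
        _ = (v / Real.sqrt (2 * b * v * w)) * (Real.exp (ε * v ^ 2) * Real.exp (a * v ^ 2)
            * Real.exp (-b * v ^ 2) * Real.exp (-b * w ^ 2) * Real.exp (2 * b * v * w)) := by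
            ring
        _ = (v / Real.sqrt (2 * b * v * w)) * (Real.exp (-c * (v - m) ^ 2) * E) := by
            rw [hcomb v]
        _ ≤ ((v - m) / Real.sqrt (2 * b * w) + 1 / Real.sqrt (2 * c))
            * (Real.exp (-c * (v - m) ^ 2) * E) := by
            apply mul_le_mul_of_nonneg_right hratio (by positivity)
        _ = ((E / Real.sqrt (2 * b * w)) * (v - m) + E / Real.sqrt (2 * c))
            * Real.exp (-c * (v - m) ^ 2) := by ring
    have hmain := main_tail_bound hc hmT
      (by positivity : (0:ℝ) ≤ E / Real.sqrt (2 * c))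
      (by positivity : (0:ℝ) ≤ E / Real.sqrt (2 * b * w)) hf0 hfle
    rw [← hX_def, hTm, one_div, inv_inv] at hmain
    have h5 : 1 / Real.sqrt (2 * b * w) ≤ 2 * δ ^ 2 / Real.sqrt (c ^ 3) := by
      rw [div_le_div_iff₀ hsbw hs3, one_mul]
      have h6 : Real.sqrt (c ^ 3) ≤ 2 * δ ^ 2 * Real.sqrt (2 * b * w) := by
        apply (Real.sqrt_le_left (by positivity)).2
        rw [mul_pow, mul_pow, Real.sq_sqrt (by positivity : (0:ℝ) ≤ 2 * b * w)]
        have h7 : c ^ 3 < 8 * b * δ ^ 4 * w := by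
          rw [div_lt_iff₀ (by positivity)] at hcase
          linarith
        nlinarith [sq_nonneg δ]
      linarith
    have hkey : (1 / Real.sqrt (2 * b * w) + δ / Real.sqrt (2 * c)) * X ≤ δ := by
      have t1 : (1 / Real.sqrt (2 * b * w)) * X
          ≤ (2 * δ ^ 2 / Real.sqrt (c ^ 3)) * (δ ^ 2 / c) :=
        mul_le_mul h5 hX1 hX0.le (by positivity)
      have t2 : (δ / Real.sqrt (2 * c)) * X ≤ (δ / Real.sqrt (2 * c)) * (δ ^ 2 / c) :=
        mul_le_mul_of_nonneg_left hX1 (by positivity)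
      have e1 : (2 * δ ^ 2 / Real.sqrt (c ^ 3)) * (δ ^ 2 / c)
          = 2 * δ ^ 4 * (1 / (c * Real.sqrt (c ^ 3))) := by
        field_simp
      have e2 : (δ / Real.sqrt (2 * c)) * (δ ^ 2 / c)
          = δ ^ 3 * (1 / (c * Real.sqrt (2 * c))) := by
        field_simp
      have hu3 : (0:ℝ) ≤ 1 / (c * Real.sqrt (c ^ 3)) := by positivity
      have hu2 : (0:ℝ) ≤ 1 / (c * Real.sqrt (2 * c)) := by positivity
      have hδ2 : δ ^ 2 ≤ 1 := pow_le_one₀ hδ.le hδ1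
      have hd4 : δ ^ 4 ≤ δ ^ 2 := by nlinarith [sq_nonneg δ]
      have hd3 : δ ^ 3 ≤ δ ^ 2 := by
        nlinarith [mul_le_mul_of_nonneg_right hδ1 (sq_nonneg δ)]
      have hsum : 2 * δ ^ 4 * (1 / (c * Real.sqrt (c ^ 3)))
          + δ ^ 3 * (1 / (c * Real.sqrt (2 * c))) ≤ δ ^ 2 * K := by
        rw [hK_def]
        have q1 : 2 * δ ^ 4 * (1 / (c * Real.sqrt (c ^ 3)))
            ≤ 2 * δ ^ 2 * (1 / (c * Real.sqrt (c ^ 3))) := by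
              nlinarith [mul_le_mul_of_nonneg_right hd4 hu3]
        have q2 : δ ^ 3 * (1 / (c * Real.sqrt (2 * c)))
            ≤ δ ^ 2 * (1 / (c * Real.sqrt (2 * c))) := by
              nlinarith [mul_le_mul_of_nonneg_right hd3 hu2]
        have : 2 * δ ^ 2 * (1 / (c * Real.sqrt (c ^ 3)))
            + δ ^ 2 * (1 / (c * Real.sqrt (2 * c)))
            = δ ^ 2 * (2 / (c * Real.sqrt (c ^ 3)) + 1 / (c * Real.sqrt (2 * c))) := by
          field_simp
        linarith
      have hfin : δ ^ 2 * K ≤ δ := by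
        nlinarith [mul_le_mul_of_nonneg_left hδKmul hδ.le]
      calc (1 / Real.sqrt (2 * b * w) + δ / Real.sqrt (2 * c)) * X
          = (1 / Real.sqrt (2 * b * w)) * X + (δ / Real.sqrt (2 * c)) * X := by ring
        _ ≤ 2 * δ ^ 4 * (1 / (c * Real.sqrt (c ^ 3)))
            + δ ^ 3 * (1 / (c * Real.sqrt (2 * c))) := by rw [← e1, ← e2]; linarith
        _ ≤ δ ^ 2 * K := hsum
        _ ≤ δ := hfin
    calc 2 * b * ∫ v in Set.Ioi T,
          v * Real.exp (ε * v ^ 2) * Real.exp (a * v ^ 2) * Real.exp (-b * v ^ 2)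
            * Real.exp (-b * w ^ 2) * besselI0 (2 * b * v * w)
        ≤ 2 * b * ((E / Real.sqrt (2 * b * w) + E / Real.sqrt (2 * c) * δ) * (X / (2 * c))) := by
          apply mul_le_mul_of_nonneg_left hmain (by positivity)
      _ = b / c * E * ((1 / Real.sqrt (2 * b * w) + δ / Real.sqrt (2 * c)) * X) := by
          field_simp [hcne]
      _ ≤ b / c * E * δ := by
          apply mul_le_mul_of_nonneg_left hkey (by positivity)
      _ = δ * (b / c) * E := by ring
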